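/- Shestakov's example of a nilpotent but not strongly nilpotent ideal: let A be the nonassociative algebra over a field F with basis {a, b, z} and multiplication determined by a·a = b, b·z = a, and all other products of basis elements equal to zero. Then the subspace I = Fa + Fb is an ideal of A which is nilpotent as a subalgebra (every product of 3 elements of I, under any bracketing, is zero), yet I is not strongly nilpotent as an ideal: for every n there is a nonzero product of elements of A containing at least n factors from I; in particular b = ((a·(b·z))·z)·a ≠ 0. -/
import Mathlib


/-- Shestakov's three-dimensional algebra with basis a, b, z and multiplication
determined by a·a = b, b·z = a, all other products of basis elements zero. -/
structure ShAlg (F : Type*) where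
  c : Fin 3 → F

namespace ShAlg

variable {F : Type*} [Field F]

instance : Zero (ShAlg F) := ⟨⟨0⟩⟩
instance : Add (ShAlg F) := ⟨fun x y => ⟨x.c + y.c⟩⟩
instance : SMul F (ShAlg F) := ⟨fun t x => ⟨t • x.c⟩⟩
/-- The bilinear multiplication determined by a·a = b, b·z = a, other basis
products zero (coordinates: 0 ↔ a, 1 ↔ b, 2 ↔ z). -/
instance : Mul (ShAlg F) := ⟨fun x y => ⟨![x.c 1 * y.c 2, x.c 0 * y.c 0, 0]⟩⟩

def a : ShAlg F := ⟨![1, 0, 0]⟩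
def b : ShAlg F := ⟨![0, 1, 0]⟩
def z : ShAlg F := ⟨![0, 0, 1]⟩

/-- Evaluation of a formal (nonassociative) bracketed product of elements of the
algebra. -/
noncomputable def ev : FreeMagma (ShAlg F) → ShAlg F :=
  FreeMagma.lift (id : ShAlg F → ShAlg F)

open Classical in
/-- The number of factors of a formal bracketed product lying in a given set. -/
noncomputable def countIn (I : Set (ShAlg F)) : FreeMagma (ShAlg F) → ℕ
  | FreeMagma.of x => if x ∈ I then 1 else 0
  | FreeMagma.mul x y => countIn I x + countIn I y

end ShAlg

namespace ShAlg

variable {F : Type*} [Field F]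

theorem ext' {x y : ShAlg F} (h : x.c = y.c) : x = y := by
  cases x; cases y; simpa using h

theorem mul_c (x y : ShAlg F) : (x * y).c = ![x.c 1 * y.c 2, x.c 0 * y.c 0, 0] := rfl

theorem zero_c : (0 : ShAlg F).c = 0 := rfl

theorem ev_of (x : ShAlg F) : ev (FreeMagma.of x) = x := rfl

theorem ev_mul (x y : FreeMagma (ShAlg F)) : ev (x * y) = ev x * ev y := rfl

/-- the witness word with 2^n factors in I, evaluating to a -/
noncomputable def W : ℕ → FreeMagma (ShAlg F)
  | 0 => FreeMagma.of a
  | n + 1 => (W n * W n) * FreeMagma.of z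

theorem ev_W (n : ℕ) : ev (W n : FreeMagma (ShAlg F)) = a := by
  induction n with
  | zero => rfl
  | succ n ih =>
    rw [W, ev_mul, ev_mul, ih, ev_of]
    refine ext' (funext fun i => ?_)
    fin_cases i <;> simp [a, b, z, mul_c]

theorem a_mem : (a : ShAlg F) ∈ {x : ShAlg F | x.c 2 = 0} := by simp [a]

theorem z_not_mem : (z : ShAlg F) ∉ {x : ShAlg F | x.c 2 = 0} := by simp [z]

theorem count_W (n : ℕ) :
    n + 1 ≤ countIn {x : ShAlg F | x.c 2 = 0} (W n : FreeMagma (ShAlg F)) := by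
  induction n with
  | zero => rw [W, countIn, if_pos a_mem]
  | succ n ih =>
    show n + 2 ≤ countIn _ (FreeMagma.mul (FreeMagma.mul (W n) (W n)) (FreeMagma.of z))
    rw [countIn, countIn, countIn]
    rw [if_neg z_not_mem]
    omega

theorem a_ne_zero : (a : ShAlg F) ≠ 0 := by
  intro h
  have : (a : ShAlg F).c 0 = (0 : ShAlg F).c 0 := by rw [h]
  simp [a, zero_c] at this

end ShAlg


open ShAlg in
/-- Shestakov's example: I = Fa + Fb is an ideal which is nilpotent as a
subalgebra (all products of three elements of I vanish) but is not strongly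
nilpotent as an ideal: there are nonzero bracketed products of elements of the
algebra with arbitrarily many factors in I; in particular b = ((a(bz))z)a ≠ 0. -/
theorem shestakov_example (F : Type*) [Field F] :
    -- the defining relations
    ((a : ShAlg F) * a = b ∧ (b : ShAlg F) * z = a ∧
      (a : ShAlg F) * b = 0 ∧ (b : ShAlg F) * a = 0 ∧ (a : ShAlg F) * z = 0 ∧
      (z : ShAlg F) * a = 0 ∧ (z : ShAlg F) * b = 0 ∧
      (b : ShAlg F) * b = 0 ∧ (z : ShAlg F) * z = 0) ∧
    -- I is an ideal
    (∀ u ∈ {x : ShAlg F | x.c 2 = 0}, ∀ v ∈ {x : ShAlg F | x.c 2 = 0},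
        u + v ∈ {x : ShAlg F | x.c 2 = 0}) ∧
    (∀ t : F, ∀ u ∈ {x : ShAlg F | x.c 2 = 0}, t • u ∈ {x : ShAlg F | x.c 2 = 0}) ∧
    (∀ x : ShAlg F, ∀ u ∈ {x : ShAlg F | x.c 2 = 0},
        x * u ∈ {x : ShAlg F | x.c 2 = 0} ∧ u * x ∈ {x : ShAlg F | x.c 2 = 0}) ∧
    -- I is nilpotent of class ≤ 3 as a subalgebra
    (∀ u ∈ {x : ShAlg F | x.c 2 = 0}, ∀ v ∈ {x : ShAlg F | x.c 2 = 0},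
      ∀ w ∈ {x : ShAlg F | x.c 2 = 0}, (u * v) * w = 0 ∧ u * (v * w) = 0) ∧
    -- but I is not strongly nilpotent as an ideal
    (∀ n : ℕ, ∃ w : FreeMagma (ShAlg F),
        n ≤ countIn {x : ShAlg F | x.c 2 = 0} w ∧ ev w ≠ 0) ∧
    (((((a : ShAlg F) * (b * z)) * z) * a = b) ∧ (b : ShAlg F) ≠ 0) := by
  have erel : ∀ {x y : ShAlg F}, x.c = y.c → x = y := fun h => ShAlg.ext' h
  refine ⟨⟨?_, ?_, ?_, ?_, ?_, ?_, ?_, ?_, ?_⟩, ?_, ?_, ?_, ?_, ?_, ?_, ?_⟩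
  · exact erel (funext fun i => by fin_cases i <;> simp [a, b, ShAlg.mul_c])
  · exact erel (funext fun i => by fin_cases i <;> simp [a, b, z, ShAlg.mul_c])
  · exact erel (funext fun i => by fin_cases i <;> simp [a, b, ShAlg.mul_c, ShAlg.zero_c])
  · exact erel (funext fun i => by fin_cases i <;> simp [a, b, ShAlg.mul_c, ShAlg.zero_c])
  · exact erel (funext fun i => by fin_cases i <;> simp [a, z, ShAlg.mul_c, ShAlg.zero_c])
  · exact erel (funext fun i => by fin_cases i <;> simp [a, z, ShAlg.mul_c, ShAlg.zero_c])
  · exact erel (funext fun i => by fin_cases i <;> simp [b, z, ShAlg.mul_c, ShAlg.zero_c])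
  · exact erel (funext fun i => by fin_cases i <;> simp [b, ShAlg.mul_c, ShAlg.zero_c])
  · exact erel (funext fun i => by fin_cases i <;> simp [z, ShAlg.mul_c, ShAlg.zero_c])
  · intro u hu v hv
    simp only [Set.mem_setOf_eq] at hu hv ⊢
    show u.c 2 + v.c 2 = 0
    rw [hu, hv, add_zero]
  · intro t u hu
    show t * u.c 2 = 0
    simp only [Set.mem_setOf_eq] at hu
    simp [hu]
  · intro x u _
    constructor <;> · show _ = (0:F); simp [ShAlg.mul_c]
  · intro u hu v hv w hw
    simp only [Set.mem_setOf_eq] at hu hv hw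
    constructor <;>
      exact erel (funext fun i => by
        fin_cases i <;> simp [ShAlg.mul_c, ShAlg.zero_c, hu, hv, hw])
  · intro n
    exact ⟨ShAlg.W n, le_trans (Nat.le_succ n) (ShAlg.count_W n), by
      rw [ShAlg.ev_W]; exact ShAlg.a_ne_zero⟩
  · exact erel (funext fun i => by fin_cases i <;> simp [a, b, z, ShAlg.mul_c])
  · intro h
    have : (b : ShAlg F).c 1 = (0 : ShAlg F).c 1 := by rw [h]
    simp [b, ShAlg.zero_c] at this
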